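/- Inner-approximation of the reach-avoid set by certificate functions (paper's Theorem 3, with the initial-set inequality made strict and the topological hypotheses made explicit): let f : E → E, let ψ₁ ψ₂ : Set E with ψ₁ open and bounded and ψ₂ open, and let v w : E → ℝ be continuously differentiable (ContDiff ℝ 1). Assume (i) ⟪gradient v y, f y⟫ ≥ 0 for all y ∈ closure (ψ₁ \ ψ₂); (ii) v y ≤ ⟪gradient w y, f y⟫ for all y ∈ closure (ψ₁ \ ψ₂); (iii) v y ≤ 0 for all y ∈ frontier ψ₁. Then every function x : ℝ → E satisfying HasDerivAt x (f (x t)) t for all t ≥ 0, x 0 ∈ ψ₁, and v (x 0) > 0 satisfies the reach-avoid property: there exists T ≥ 0 with x T ∈ ψ₂ and x t ∈ ψ₁ for all t ∈ Set.Icc 0 T. -/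

import Mathlib

open Set

noncomputable section

/-- The state space: `EuclideanSpace ℝ (Fin n)`. -/
abbrev E (n : ℕ) := EuclideanSpace ℝ (Fin n)

/-- A controller from time `τ` with at most `i` switches: a finite sequence
`(q₀,t₀),…,(q_k,t_k)` with `k ≤ i`, `t 0 = τ` and nondecreasing switching times. -/
structure Controller (Q : Type) (τ : ℝ) (i : ℕ) where
  k : ℕ
  hk : k ≤ i
  q : ℕ → Q
  t : ℕ → ℝ
  ht0 : t 0 = τ
  mono : ∀ j, j < k → t j ≤ t (j + 1)

/-- `Sat x τ`: the signal `x` satisfies `φ₁ U_{I ⊖ τ} φ₂` from time `τ`. -/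
def Sat {n : ℕ} (φ₁ φ₂ : E n → ℝ → Prop) (l u : ℝ) (x : ℝ → E n) (τ : ℝ) : Prop :=
  ∃ τ', τ ≤ τ' ∧ τ' - τ ∈ Set.Icc (l - τ) (u - τ) ∩ Set.Ici (0 : ℝ) ∧
    φ₂ (x τ') τ' ∧ ∀ τ'' ∈ Set.Icc τ τ', φ₁ (x τ'') τ''

/-- `x` is a trajectory under the controller `c` from `(x₀, τ)`. -/
def IsTraj {n : ℕ} {Q : Type} (f : Q → E n → E n) {τ : ℝ} {i : ℕ}
    (c : Controller Q τ i) (x₀ : E n) (x : ℝ → E n) : Prop :=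
  ContinuousOn x (Set.Ici τ) ∧ x τ = x₀ ∧
    ∀ j ≤ c.k, ∀ s : ℝ, c.t j ≤ s → (j < c.k → s < c.t (j + 1)) →
      HasDerivWithinAt x (f (c.q j) (x s)) (Set.Ici s) s

/-- The state-time set `X q i`. -/
def X {n : ℕ} {Q : Type} (φ₁ φ₂ : E n → ℝ → Prop) (l u : ℝ) (f : Q → E n → E n)
    (q : Q) (i : ℕ) : Set (E n × ℝ) :=
  {p | 0 ≤ p.2 ∧ ∃ c : Controller Q p.2 i, c.q 0 = q ∧
    ∃ x : ℝ → E n, IsTraj f c p.1 x ∧ Sat φ₁ φ₂ l u x p.2}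

/-- A mode-`q` trajectory from `(x₀, τ)` (trajectory under the single-element
controller `(q, τ)`). -/
def IsModeTraj {n : ℕ} {Q : Type} (f : Q → E n → E n) (q : Q) (x₀ : E n) (τ : ℝ)
    (x : ℝ → E n) : Prop :=
  ContinuousOn x (Set.Ici τ) ∧ x τ = x₀ ∧
    ∀ s : ℝ, τ ≤ s → HasDerivWithinAt x (f q (x s)) (Set.Ici s) s

/-- `Ψ` is a global flow for mode `q`. -/
def IsGlobalFlow {n : ℕ} {Q : Type} (f : Q → E n → E n) (q : Q)
    (Ψ : E n → ℝ → ℝ → E n) : Prop :=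
  (∀ x₀ τ, Ψ x₀ τ τ = x₀) ∧
  (∀ (x₀ : E n) (τ t : ℝ), HasDerivAt (fun s => Ψ x₀ τ s) (f q (Ψ x₀ τ t)) t) ∧
  (∀ (x₀ : E n) (τ : ℝ) (x : ℝ → E n),
      IsModeTraj f q x₀ τ x → Set.EqOn x (Ψ x₀ τ) (Set.Ici τ))

/-- Relaxing the switching bound of a controller. -/
def Controller.relax {Q : Type} {τ : ℝ} {i j : ℕ} (h : i ≤ j)
    (c : Controller Q τ i) : Controller Q τ j :=
  ⟨c.k, c.hk.trans h, c.q, c.t, c.ht0, c.mono⟩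

/-- Prepend the pair `(q, τ)` to a controller from time `τ' ≥ τ`. -/
def Controller.prepend {Q : Type} {τ' : ℝ} {i : ℕ} (q : Q) (τ : ℝ) (h : τ ≤ τ')
    (c : Controller Q τ' i) : Controller Q τ (i + 1) where
  k := c.k + 1
  hk := Nat.succ_le_succ c.hk
  q := fun j => match j with | 0 => q | Nat.succ m => c.q m
  t := fun j => match j with | 0 => τ | Nat.succ m => c.t m
  ht0 := rfl
  mono := by
    intro j hj
    cases j with
    | zero => show τ ≤ c.t 0; rw [c.ht0]; exact h
    | succ m =>
        show c.t m ≤ c.t (m + 1)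
        exact c.mono m (Nat.lt_of_succ_lt_succ hj)

open RealInnerProductSpace in
/-- Paper's Theorem 3: inner-approximation of the reach-avoid set by certificate
functions `v`, `w`. -/
theorem stmt12 {n : ℕ} (f : E n → E n) (ψ₁ ψ₂ : Set (E n))
    (h₁open : IsOpen ψ₁) (h₁bdd : Bornology.IsBounded ψ₁) (h₂open : IsOpen ψ₂)
    (v w : E n → ℝ) (hv : ContDiff ℝ 1 v) (hw : ContDiff ℝ 1 w)
    (hgrow : ∀ y ∈ closure (ψ₁ \ ψ₂), 0 ≤ ⟪gradient v y, f y⟫)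
    (hbound : ∀ y ∈ closure (ψ₁ \ ψ₂), v y ≤ ⟪gradient w y, f y⟫)
    (hbdry : ∀ y ∈ frontier ψ₁, v y ≤ 0)
    (x : ℝ → E n) (hx : ∀ t ≥ (0 : ℝ), HasDerivAt x (f (x t)) t)
    (hx0 : x 0 ∈ ψ₁) (hv0 : 0 < v (x 0)) :
    ∃ T ≥ (0 : ℝ), x T ∈ ψ₂ ∧ ∀ t ∈ Set.Icc (0 : ℝ) T, x t ∈ ψ₁ := by
  classical
  by_cases hx02 : x 0 ∈ ψ₂
  · exact ⟨0, le_refl 0, hx02, fun t ht => by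
      have h : t = 0 := le_antisymm ht.2 ht.1
      rwa [h]⟩
  have hx0' : x 0 ∈ ψ₁ \ ψ₂ := ⟨hx0, hx02⟩
  have hcx : ∀ s : ℝ, 0 ≤ s → ContinuousAt x s := fun s hs => (hx s hs).continuousAt
  have hdv : ∀ s : ℝ, 0 ≤ s → HasDerivAt (fun t => v (x t))
      (⟪gradient v (x s), f (x s)⟫) s := by
    intro s hs
    have h1 := ((hv.differentiable one_ne_zero) (x s)).hasFDerivAt.comp_hasDerivAt s (hx s hs)
    have h2 : ⟪gradient v (x s), f (x s)⟫ = fderiv ℝ v (x s) (f (x s)) :=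
      InnerProductSpace.toDual_symm_apply
    rwa [h2]
  have hdw : ∀ s : ℝ, 0 ≤ s → HasDerivAt (fun t => w (x t))
      (⟪gradient w (x s), f (x s)⟫) s := by
    intro s hs
    have h1 := ((hw.differentiable one_ne_zero) (x s)).hasFDerivAt.comp_hasDerivAt s (hx s hs)
    have h2 : ⟪gradient w (x s), f (x s)⟫ = fderiv ℝ w (x s) (f (x s)) :=
      InnerProductSpace.toDual_symm_apply
    rwa [h2]
  have hkeyv : ∀ T, 0 ≤ T → (∀ s ∈ Set.Icc (0:ℝ) T, x s ∈ closure (ψ₁ \ ψ₂)) →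
      ∀ t ∈ Set.Icc (0:ℝ) T, v (x 0) ≤ v (x t) := by
    intro T hT hmem
    have hmono : MonotoneOn (fun t => v (x t)) (Set.Icc 0 T) := by
      apply monotoneOn_of_deriv_nonneg (convex_Icc 0 T)
      · intro s hs
        exact ((hdv s hs.1).continuousAt).continuousWithinAt
      · intro s hs
        rw [interior_Icc] at hs
        exact ((hdv s hs.1.le).differentiableAt).differentiableWithinAt
      · intro s hs
        rw [interior_Icc] at hs
        rw [(hdv s hs.1.le).deriv]
        exact hgrow _ (hmem s ⟨hs.1.le, hs.2.le⟩)
    intro t ht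
    exact hmono (Set.left_mem_Icc.2 hT) ht ht.1
  have hkeyw : ∀ T, 0 ≤ T → (∀ s ∈ Set.Icc (0:ℝ) T, x s ∈ closure (ψ₁ \ ψ₂)) →
      w (x 0) + v (x 0) * T ≤ w (x T) := by
    intro T hT hmem
    have hmono : MonotoneOn (fun t => w (x t) - v (x 0) * t) (Set.Icc 0 T) := by
      apply monotoneOn_of_deriv_nonneg (convex_Icc 0 T)
      · intro s hs
        exact (((hdw s hs.1).sub ((HasDerivAt.const_mul (v (x 0)) (hasDerivAt_id' s)))).continuousAt).continuousWithinAt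
      · intro s hs
        rw [interior_Icc] at hs
        exact (((hdw s hs.1.le).sub ((HasDerivAt.const_mul (v (x 0)) (hasDerivAt_id' s)))).differentiableAt).differentiableWithinAt
      · intro s hs
        rw [interior_Icc] at hs
        rw [HasDerivAt.deriv (f := fun t => w (x t) - v (x 0) * t) ((hdw s hs.1.le).sub ((HasDerivAt.const_mul (v (x 0)) (hasDerivAt_id' s))))]
        have h1 : v (x s) ≤ ⟪gradient w (x s), f (x s)⟫ := hbound _ (hmem s ⟨hs.1.le, hs.2.le⟩)
        have h2 : v (x 0) ≤ v (x s) := hkeyv T hT hmem s ⟨hs.1.le, hs.2.le⟩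
        simp only [mul_one]
        linarith
    have h := hmono (Set.left_mem_Icc.2 hT) (Set.right_mem_Icc.2 hT) hT
    simp only [mul_zero, sub_zero] at h
    linarith
  -- bound on w over closure ψ₁
  obtain ⟨M, hMmem⟩ : BddAbove (w '' closure ψ₁) :=
    (h₁bdd.isCompact_closure.image hw.continuous).bddAbove
  have hM : ∀ y ∈ closure ψ₁, w y ≤ M := fun y hy => hMmem ⟨y, hy, rfl⟩
  set A : Set ℝ := {t | 0 ≤ t ∧ ∀ s ∈ Set.Icc (0:ℝ) t, x s ∈ ψ₁ \ ψ₂} with hAdef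
  have hA0 : (0:ℝ) ∈ A := ⟨le_refl 0, fun s hs => by
    have h : s = 0 := le_antisymm hs.2 hs.1
    rwa [h]⟩
  have hAbdd : BddAbove A := by
    refine ⟨(M - w (x 0)) / v (x 0), fun t ht => ?_⟩
    have hmem : ∀ s ∈ Set.Icc (0:ℝ) t, x s ∈ closure (ψ₁ \ ψ₂) :=
      fun s hs => subset_closure (ht.2 s hs)
    have h1 := hkeyw t ht.1 hmem
    have h2 : w (x t) ≤ M :=
      hM _ (closure_mono Set.diff_subset (hmem t (Set.right_mem_Icc.2 ht.1)))
    rw [le_div_iff₀ hv0]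
    nlinarith
  set τ := sSup A with hτdef
  have hτ0 : 0 ≤ τ := le_csSup hAbdd hA0
  have hlt : ∀ s, 0 ≤ s → s < τ → x s ∈ ψ₁ \ ψ₂ := by
    intro s hs hsτ
    obtain ⟨t, htA, hst⟩ := exists_lt_of_lt_csSup ⟨0, hA0⟩ hsτ
    exact htA.2 s ⟨hs, hst.le⟩
  have hclos : ∀ s ∈ Set.Icc (0:ℝ) τ, x s ∈ closure (ψ₁ \ ψ₂) := by
    intro s hs
    rcases lt_or_eq_of_le hs.2 with h | h
    · exact subset_closure (hlt s hs.1 h)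
    · rw [h]
      rcases eq_or_lt_of_le hτ0 with h0 | h0
      · rw [← h0]; exact subset_closure hx0'
      · have hc : ContinuousWithinAt x (Set.Ico 0 τ) τ := (hcx τ hτ0).continuousWithinAt
        have hτc : τ ∈ closure (Set.Ico (0:ℝ) τ) := by
          rw [closure_Ico h0.ne]
          exact Set.right_mem_Icc.2 hτ0
        refine closure_mono ?_ (hc.mem_closure_image hτc)
        rintro y ⟨s', hs', rfl⟩
        exact hlt s' hs'.1 hs'.2
  have hvτ : 0 < v (x τ) :=
    lt_of_lt_of_le hv0 (hkeyv τ hτ0 hclos τ (Set.right_mem_Icc.2 hτ0))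
  have hψ1τ : x τ ∈ ψ₁ := by
    have hclψ : x τ ∈ closure ψ₁ :=
      closure_mono Set.diff_subset (hclos τ (Set.right_mem_Icc.2 hτ0))
    by_contra hnot
    have hfr : x τ ∈ frontier ψ₁ := by
      rw [h₁open.frontier_eq]
      exact ⟨hclψ, hnot⟩
    exact absurd (hbdry _ hfr) (not_le.2 hvτ)
  by_cases hψ2τ : x τ ∈ ψ₂
  · refine ⟨τ, hτ0, hψ2τ, fun t ht => ?_⟩
    rcases lt_or_eq_of_le ht.2 with h | h
    · exact (hlt t ht.1 h).1
    · rw [h]; exact hψ1τ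
  · have hev : ∀ᶠ s in nhds τ, x s ∈ ψ₁ := (hcx τ hτ0).eventually_mem (h₁open.mem_nhds hψ1τ)
    obtain ⟨δ, hδ, hball⟩ := Metric.eventually_nhds_iff.1 hev
    by_cases hex : ∃ s, τ < s ∧ s ≤ τ + δ / 2 ∧ x s ∈ ψ₂
    · obtain ⟨s', h1, h2, h3⟩ := hex
      refine ⟨s', le_trans hτ0 h1.le, h3, fun t ht => ?_⟩
      rcases le_or_gt t τ with h | h
      · rcases lt_or_eq_of_le h with h' | h'
        · exact (hlt t ht.1 h').1
        · rw [h']; exact hψ1τ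
      · apply hball
        rw [Real.dist_eq, abs_of_pos (by linarith : (0:ℝ) < t - τ)]
        linarith [ht.2]
    · push_neg at hex
      exfalso
      have hmemA : τ + δ / 2 ∈ A := by
        refine ⟨by linarith, fun s hs => ?_⟩
        rcases lt_trichotomy s τ with h | h | h
        · exact hlt s hs.1 h
        · rw [h]; exact ⟨hψ1τ, hψ2τ⟩
        · refine ⟨hball ?_, hex s h hs.2⟩
          rw [Real.dist_eq, abs_of_pos (by linarith : (0:ℝ) < s - τ)]
          linarith [hs.2]
      have := le_csSup hAbdd hmemA
      linarith
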